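/- Let C be the free group of rank 3 with basis x₁, x₂, x₃ and let φ be the endomorphism of C determined by φ(x₁) = x₁, φ(x₂) = x₂x₁, φ(x₃) = x₃x₂. Then for every c ∈ C the function n ↦ |φⁿ(c)| is dominated by a quadratic function of n: there exists a constant K > 0 such that |φⁿ(c)| ≤ K(n² + 1) for all n ∈ ℕ, where |w| denotes the length of the reduced word representing w in the basis x₁, x₂, x₃. -/

import Mathlib

/-- The endomorphism `φ` of the free group `C = F(x₁, x₂, x₃)` with `φ(x₁) = x₁`,
`φ(x₂) = x₂x₁`, `φ(x₃) = x₃x₂` (here `xᵢ = FreeGroup.of (i-1)`). -/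
noncomputable def gerstenPhi : FreeGroup (Fin 3) →* FreeGroup (Fin 3) :=
  FreeGroup.lift
    ![FreeGroup.of 0, FreeGroup.of 1 * FreeGroup.of 0, FreeGroup.of 2 * FreeGroup.of 1]

lemma gerstenPhi_of0 : gerstenPhi (FreeGroup.of 0) = FreeGroup.of 0 := by
  simp [gerstenPhi]

lemma gerstenPhi_of1 :
    gerstenPhi (FreeGroup.of 1) = FreeGroup.of 1 * FreeGroup.of 0 := by
  simp [gerstenPhi]

lemma gerstenPhi_of2 :
    gerstenPhi (FreeGroup.of 2) = FreeGroup.of 2 * FreeGroup.of 1 := by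
  simp [gerstenPhi]

lemma gersten_iter0 (n : ℕ) :
    (⇑gerstenPhi)^[n] (FreeGroup.of 0) = FreeGroup.of 0 := by
  induction n with
  | zero => rfl
  | succ n ih => rw [Function.iterate_succ_apply', ih, gerstenPhi_of0]

lemma gersten_iter1 (n : ℕ) :
    ((⇑gerstenPhi)^[n] (FreeGroup.of 1)).norm ≤ n + 1 := by
  induction n with
  | zero => simp [FreeGroup.norm_of]
  | succ n ih =>
    rw [Function.iterate_succ_apply, gerstenPhi_of1, iterate_map_mul,
      gersten_iter0]
    calc _ ≤ ((⇑gerstenPhi)^[n] (FreeGroup.of 1)).norm + (FreeGroup.of (0 : Fin 3)).norm :=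
          FreeGroup.norm_mul_le _ _
      _ ≤ (n + 1) + 1 := by rw [FreeGroup.norm_of]; omega

lemma gersten_iter2 (n : ℕ) :
    ((⇑gerstenPhi)^[n] (FreeGroup.of 2)).norm ≤ n ^ 2 + 1 := by
  induction n with
  | zero => simp [FreeGroup.norm_of]
  | succ n ih =>
    rw [Function.iterate_succ_apply, gerstenPhi_of2, iterate_map_mul]
    calc _ ≤ ((⇑gerstenPhi)^[n] (FreeGroup.of 2)).norm
            + ((⇑gerstenPhi)^[n] (FreeGroup.of 1)).norm := FreeGroup.norm_mul_le _ _
      _ ≤ (n ^ 2 + 1) + (n + 1) := Nat.add_le_add ih (gersten_iter1 n)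
      _ ≤ (n + 1) ^ 2 + 1 := by nlinarith

lemma gersten_iter_of (i : Fin 3) (n : ℕ) :
    ((⇑gerstenPhi)^[n] (FreeGroup.of i)).norm ≤ n ^ 2 + 1 := by
  fin_cases i
  · show ((⇑gerstenPhi)^[n] (FreeGroup.of (0 : Fin 3))).norm ≤ _
    rw [gersten_iter0, FreeGroup.norm_of]; nlinarith
  · show ((⇑gerstenPhi)^[n] (FreeGroup.of (1 : Fin 3))).norm ≤ _
    calc _ ≤ n + 1 := gersten_iter1 n
      _ ≤ n ^ 2 + 1 := by nlinarith
  · show ((⇑gerstenPhi)^[n] (FreeGroup.of (2 : Fin 3))).norm ≤ _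
    exact gersten_iter2 n

/-- For every `c` in the free group `C = F(x₁, x₂, x₃)`, the reduced word length
of `φⁿ(c)` is dominated by a quadratic function of `n`: there is a constant `K > 0` with
`|φⁿ(c)| ≤ K(n² + 1)` for all `n ∈ ℕ`. -/
theorem gerstenPhi_iterate_norm_quadratic_bound (c : FreeGroup (Fin 3)) :
    ∃ K : ℕ, 0 < K ∧ ∀ n : ℕ, ((⇑gerstenPhi)^[n] c).norm ≤ K * (n ^ 2 + 1) := by
  induction c using FreeGroup.induction_on with
  | C1 =>
    exact ⟨1, one_pos, fun n => by simp [FreeGroup.norm_one]⟩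
  | of i =>
    exact ⟨1, one_pos, fun n => by simpa using gersten_iter_of i n⟩
  | inv_of i _ =>
    refine ⟨1, one_pos, fun n => ?_⟩
    rw [iterate_map_inv, FreeGroup.norm_inv_eq]
    simpa using gersten_iter_of i n
  | mul x y hx hy =>
    obtain ⟨K₁, hK₁, h₁⟩ := hx
    obtain ⟨K₂, hK₂, h₂⟩ := hy
    refine ⟨K₁ + K₂, by omega, fun n => ?_⟩
    rw [iterate_map_mul]
    calc _ ≤ ((⇑gerstenPhi)^[n] x).norm + ((⇑gerstenPhi)^[n] y).norm :=
          FreeGroup.norm_mul_le _ _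
      _ ≤ K₁ * (n ^ 2 + 1) + K₂ * (n ^ 2 + 1) := Nat.add_le_add (h₁ n) (h₂ n)
      _ = (K₁ + K₂) * (n ^ 2 + 1) := by ring
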